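/- Let M be an N × N matrix over a field F with at most m nonzero entries. Then the spiky rank of M over F is at most 2√m. -/

import Mathlib

open Matrix MeasureTheory

/-- A blocky matrix: its support is a disjoint union of combinatorial rectangles,
with value 1 on the support and 0 elsewhere. -/
def IsBlocky {F : Type*} [Field F] {m n : Type*} (M : Matrix m n F) : Prop :=
  ∃ (k : ℕ) (S : Fin k → Finset m) (T : Fin k → Finset n),
    (∀ a b, a ≠ b → Disjoint (S a) (S b)) ∧
    (∀ a b, a ≠ b → Disjoint (T a) (T b)) ∧
    (∀ i j, (∃ l, i ∈ S l ∧ j ∈ T l) → M i j = 1) ∧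
    (∀ i j, (¬ ∃ l, i ∈ S l ∧ j ∈ T l) → M i j = 0)

/-- A spiky matrix: the entrywise product of a blocky matrix and a rank-one matrix. -/
def IsSpiky {F : Type*} [Field F] {m n : Type*} (M : Matrix m n F) : Prop :=
  ∃ (B : Matrix m n F) (u : m → F) (v : n → F),
    IsBlocky B ∧ ∀ i j, M i j = B i j * (u i * v j)

/-- The spiky rank: minimum number of spiky matrices summing to `M`. -/
noncomputable def spikyRank {F : Type*} [Field F] {m n : Type*} (M : Matrix m n F) : ℕ :=
  sInf {r | ∃ f : Fin r → Matrix m n F, (∀ i, IsSpiky (f i)) ∧ ∑ i, f i = M}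

/-- The blocky rank: minimum number of blocky matrices whose linear combination equals `M`. -/
noncomputable def blockyRank {F : Type*} [Field F] {m n : Type*} (M : Matrix m n F) : ℕ :=
  sInf {r | ∃ (f : Fin r → Matrix m n F) (c : Fin r → F),
    (∀ i, IsBlocky (f i)) ∧ ∑ i, c i • f i = M}

/-- Sparsity: the number of nonzero entries of a matrix. -/
noncomputable def matSparsity {F : Type*} [Zero F] {m n : Type*} (M : Matrix m n F) : ℕ :=
  {p : m × n | M p.1 p.2 ≠ 0}.ncard

/-- Rank-`r` rigidity: minimum number of entries that must be changed to bring the rank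
down to `r`. -/
noncomputable def rigidity {F : Type*} [Field F] {N : ℕ}
    (M : Matrix (Fin N) (Fin N) F) (r : ℕ) : ℕ :=
  sInf {s | ∃ A C : Matrix (Fin N) (Fin N) F, M = A + C ∧ A.rank ≤ r ∧ matSparsity C ≤ s}

/-- Sign spiky rank: minimum spiky rank over real matrices with the same sign pattern. -/
noncomputable def signSpikyRank {m n : Type*} (M : Matrix m n ℝ) : ℕ :=
  sInf {r | ∃ A : Matrix m n ℝ,
    (∀ i j, Real.sign (A i j) = Real.sign (M i j)) ∧ spikyRank A ≤ r}

/-- Blocky cover number: minimum number of blocky matrices whose supports' union is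
exactly the set of 1-entries of the Boolean matrix `M`. -/
noncomputable def blockyCover {m n : Type*} (M : Matrix m n ℝ) : ℕ :=
  sInf {k | ∃ f : Fin k → Matrix m n ℝ, (∀ l, IsBlocky (f l)) ∧
    ∀ i j, M i j = 1 ↔ ∃ l, f l i j = 1}
def SpikySum {F : Type*} [Field F] {N : ℕ} (r : ℕ) (M : Matrix (Fin N) (Fin N) F) : Prop :=
  ∃ f : Fin r → Matrix (Fin N) (Fin N) F, (∀ i, IsSpiky (f i)) ∧ ∑ i, f i = M

lemma spikySum_add {F : Type*} [Field F] {N : ℕ} {a b : ℕ}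
    {A B : Matrix (Fin N) (Fin N) F} (hA : SpikySum a A) (hB : SpikySum b B) :
    SpikySum (a + b) (A + B) := by
  obtain ⟨f, hf, hfs⟩ := hA
  obtain ⟨g, hg, hgs⟩ := hB
  refine ⟨Fin.append f g, ?_, ?_⟩
  · intro i
    refine Fin.addCases (fun i => ?_) (fun i => ?_) i
    · simpa [Fin.append_left] using hf i
    · simpa [Fin.append_right] using hg i
  · rw [Fin.sum_univ_add]
    simp only [Fin.append_left, Fin.append_right, hfs, hgs]

lemma isSpiky_of_col_unique {F : Type*} [Field F] {N : ℕ} (M : Matrix (Fin N) (Fin N) F)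
    (h : ∀ j i i', M i j ≠ 0 → M i' j ≠ 0 → i = i') : IsSpiky M := by
  classical
  refine ⟨fun i j => if M i j ≠ 0 then 1 else 0, fun _ => 1, fun j => ∑ i, M i j, ?_, ?_⟩
  · refine ⟨N, fun l => {l}, fun l => Finset.univ.filter fun j => M l j ≠ 0, ?_, ?_, ?_, ?_⟩
    · intro a b hab; simpa using hab
    · intro a b hab
      rw [Finset.disjoint_left]
      intro j hj hj'
      simp only [Finset.mem_filter] at hj hj'
      exact hab (h j a b hj.2 hj'.2)
    · rintro i j ⟨l, hi, hj⟩
      simp only [Finset.mem_singleton] at hi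
      subst hi
      simp only [Finset.mem_filter] at hj
      simp [hj.2]
    · intro i j hn
      simp only [ite_eq_right_iff]
      intro hMij
      exact absurd ⟨i, Finset.mem_singleton_self i, by simp [hMij]⟩ hn
  · intro i j
    by_cases hij : M i j = 0
    · simp [hij]
    · simp only [hij, ne_eq, not_false_iff, if_true, one_mul]
      rw [Finset.sum_eq_single i (fun i' _ hne => by
        by_contra hc
        exact hne (h j i' i hc hij)) (by simp)]

lemma isSpiky_single_col {F : Type*} [Field F] {N : ℕ} (M : Matrix (Fin N) (Fin N) F)
    (j0 : Fin N) (h : ∀ i j, j ≠ j0 → M i j = 0) : IsSpiky M := by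
  classical
  refine ⟨fun i j => if j = j0 then 1 else 0, fun i => M i j0,
    fun j => if j = j0 then 1 else 0, ?_, ?_⟩
  · refine ⟨1, fun _ => Finset.univ, fun _ => {j0}, ?_, ?_, ?_, ?_⟩
    · intro a b hab; exact absurd (Subsingleton.elim a b) hab
    · intro a b hab; exact absurd (Subsingleton.elim a b) hab
    · rintro i j ⟨l, hi, hj⟩
      simp only [Finset.mem_singleton] at hj
      simp [hj]
    · intro i j hn
      have : j ≠ j0 := fun hj => hn ⟨0, Finset.mem_univ i, by simp [hj]⟩
      simp [this]
  · intro i j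
    by_cases hj : j = j0
    · subst hj; simp
    · simp [hj, h i j hj]

lemma spikySum_zero {F : Type*} [Field F] {N : ℕ} : SpikySum 0 (0 : Matrix (Fin N) (Fin N) F) :=
  ⟨fun i => 0, fun i => i.elim0, by simp⟩

lemma spikySum_one {F : Type*} [Field F] {N : ℕ} {A : Matrix (Fin N) (Fin N) F}
    (h : IsSpiky A) : SpikySum 1 A :=
  ⟨fun _ => A, fun _ => h, by simp⟩

lemma spikySum_of_col_card {F : Type*} [Field F] [DecidableEq F] {N : ℕ} (t : ℕ) :
    ∀ (M : Matrix (Fin N) (Fin N) F),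
      (∀ j, (Finset.univ.filter fun i => M i j ≠ 0).card ≤ t) → SpikySum t M := by
  induction t with
  | zero =>
    intro M h
    have : M = 0 := by
      ext i j
      by_contra hc
      have hmem : i ∈ Finset.univ.filter fun i => M i j ≠ 0 := by
        simp only [Finset.mem_filter, Finset.mem_univ, true_and]; exact hc
      have := Finset.card_pos.mpr ⟨i, hmem⟩
      have := h j
      omega
    rw [this]; exact spikySum_zero
  | succ t ih =>
    intro M h
    set A : Matrix (Fin N) (Fin N) F :=
      fun i j => if (M i j ≠ 0 ∧ ∀ i', M i' j ≠ 0 → i ≤ i') then M i j else 0 with hA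
    have hAdef : ∀ i j, A i j =
        if (M i j ≠ 0 ∧ ∀ i', M i' j ≠ 0 → i ≤ i') then M i j else 0 := fun i j => rfl
    have hAspiky : IsSpiky A := by
      apply isSpiky_of_col_unique
      intro j i i' hi hi'
      have h1 : M i j ≠ 0 ∧ ∀ k, M k j ≠ 0 → i ≤ k := by
        by_contra hc; rw [hAdef, if_neg hc] at hi; exact hi rfl
      have h2 : M i' j ≠ 0 ∧ ∀ k, M k j ≠ 0 → i' ≤ k := by
        by_contra hc; rw [hAdef, if_neg hc] at hi'; exact hi' rfl
      exact le_antisymm (h1.2 i' h2.1) (h2.2 i h1.1)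
    have hM' : ∀ j, (Finset.univ.filter fun i => (M - A) i j ≠ 0).card ≤ t := by
      intro j
      set s := Finset.univ.filter fun i => M i j ≠ 0 with hs
      rcases s.eq_empty_or_nonempty with he | hne
      · have hz : ∀ i, M i j = 0 := by
          intro i
          by_contra hc
          have : i ∈ s := by
            rw [hs]; simp only [Finset.mem_filter, Finset.mem_univ, true_and]; exact hc
          rw [he] at this
          exact absurd this (Finset.notMem_empty i)
        have hemp : (Finset.univ.filter fun i => (M - A) i j ≠ 0) = ∅ := by
          apply Finset.filter_eq_empty_iff.mpr
          intro i _
          have hAz : A i j = 0 := by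
            rw [hAdef]; apply if_neg; intro hc; exact hc.1 (hz i)
          simp [Matrix.sub_apply, hz i, hAz]
        rw [hemp]
        simp
      · set i0 := s.min' hne with hi0
        have hi0mem : M i0 j ≠ 0 :=
          (Finset.mem_filter.mp (s.min'_mem hne)).2
        have hmin : ∀ i', M i' j ≠ 0 → i0 ≤ i' := by
          intro i' hi'
          refine s.min'_le i' ?_
          rw [hs]; simp only [Finset.mem_filter, Finset.mem_univ, true_and]; exact hi'
        have hsub : (Finset.univ.filter fun i => (M - A) i j ≠ 0) ⊆ s.erase i0 := by
          intro i hi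
          rw [Finset.mem_filter] at hi; simp only [Matrix.sub_apply] at hi
          have hMi : M i j ≠ 0 := by
            intro hz
            apply hi.2
            have hAz : A i j = 0 := by
              rw [hAdef]; apply if_neg; intro hc; exact hc.1 hz
            rw [hz, hAz, sub_zero]
          have hii0 : i ≠ i0 := by
            intro he
            have hAe : A i j = M i j := by
              rw [hAdef]
              apply if_pos
              exact ⟨hMi, fun i' h' => he ▸ hmin i' h'⟩
            exact hi.2 (by rw [hAe, sub_self])
          refine Finset.mem_erase.mpr ⟨hii0, ?_⟩
          rw [hs]; simp only [Finset.mem_filter, Finset.mem_univ, true_and]; exact hMi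
        have h1 := Finset.card_le_card hsub
        have h2 : (s.erase i0).card = s.card - 1 :=
          Finset.card_erase_of_mem (s.min'_mem hne)
        have h3 := h j
        rw [← hs] at h3
        omega
    have hsum := spikySum_add (spikySum_one hAspiky) (ih (M - A) hM')
    have heq : A + (M - A) = M := by abel
    rw [heq, Nat.add_comm] at hsum
    exact hsum

lemma spikySum_finset_sum {F : Type*} [Field F] {N : ℕ} {ι : Type*}
    (s : Finset ι) (g : ι → Matrix (Fin N) (Fin N) F)
    (h : ∀ j ∈ s, IsSpiky (g j)) : SpikySum s.card (∑ j ∈ s, g j) := by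
  classical
  refine ⟨fun i => g (s.equivFin.symm i), fun i => h _ (s.equivFin.symm i).2, ?_⟩
  calc ∑ i : Fin s.card, g (s.equivFin.symm i)
      = ∑ x : s, g x := Equiv.sum_comp s.equivFin.symm (fun x : s => g x)
    _ = ∑ j ∈ s, g j := Finset.sum_coe_sort s g

lemma matSparsity_eq_sum {F : Type*} [Field F] [DecidableEq F] {N : ℕ}
    (M : Matrix (Fin N) (Fin N) F) :
    matSparsity M = ∑ j, (Finset.univ.filter fun i => M i j ≠ 0).card := by
  rw [matSparsity, Set.ncard_eq_toFinset_card', Set.toFinset_setOf, Finset.card_filter,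
    Fintype.sum_prod_type, Finset.sum_comm]
  congr 1
  ext j
  rw [Finset.card_filter]

/-- A matrix with at most m nonzero entries has spiky rank at most 2 * sqrt m. -/
theorem spikyRank_le_two_sqrt_sparsity {F : Type*} [Field F] {N : ℕ}
    (M : Matrix (Fin N) (Fin N) F) (m : ℕ) (hm : matSparsity M ≤ m) :
    (spikyRank M : ℝ) ≤ 2 * Real.sqrt m := by
  classical
  set t := Nat.sqrt m with ht
  set H := Finset.univ.filter
    (fun j => t < (Finset.univ.filter fun i => M i j ≠ 0).card) with hH
  set C : Fin N → Matrix (Fin N) (Fin N) F :=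
    fun j0 => fun i j => if j = j0 then M i j else 0 with hC
  have hCspiky : ∀ j0, IsSpiky (C j0) :=
    fun j0 => isSpiky_single_col _ j0 (fun i j hj => if_neg hj)
  have hheavy : SpikySum H.card (∑ j0 ∈ H, C j0) :=
    spikySum_finset_sum H C (fun j0 _ => hCspiky j0)
  set L : Matrix (Fin N) (Fin N) F := fun i j => if j ∈ H then 0 else M i j with hL
  have hLdef : ∀ i j, L i j = if j ∈ H then 0 else M i j := fun i j => rfl
  have hLcol : ∀ j, (Finset.univ.filter fun i => L i j ≠ 0).card ≤ t := by
    intro j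
    by_cases hj : j ∈ H
    · have hemp : (Finset.univ.filter fun i => L i j ≠ 0) = ∅ := by
        apply Finset.filter_eq_empty_iff.mpr
        intro i _
        simp [hLdef, hj]
      rw [hemp]; simp
    · have hcong : (Finset.univ.filter fun i => L i j ≠ 0)
          = (Finset.univ.filter fun i => M i j ≠ 0) := by
        apply Finset.filter_congr
        intro i _
        rw [hLdef, if_neg hj]
      rw [hcong]
      have := hj
      rw [hH, Finset.mem_filter] at this
      push_neg at this
      exact this (Finset.mem_univ j)
  have hlight : SpikySum t L := spikySum_of_col_card t L hLcol
  have hdecomp : (∑ j0 ∈ H, C j0) + L = M := by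
    ext i j
    rw [Matrix.add_apply, Matrix.sum_apply]
    have hCd : ∀ j0, C j0 i j = if j = j0 then M i j else 0 := fun j0 => rfl
    simp only [hCd]
    rw [Finset.sum_ite_eq H j (fun _ => M i j), hLdef]
    by_cases hj : j ∈ H
    · rw [if_pos hj, if_pos hj, add_zero]
    · rw [if_neg hj, if_neg hj, zero_add]
  have hSS : SpikySum (H.card + t) M := by
    rw [← hdecomp]; exact spikySum_add hheavy hlight
  have hrank : spikyRank M ≤ H.card + t := Nat.sInf_le hSS
  have hcount : H.card * (t + 1) ≤ m := by
    have h1 : ∑ _j ∈ H, (t + 1) ≤ ∑ j ∈ H, (Finset.univ.filter fun i => M i j ≠ 0).card := by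
      apply Finset.sum_le_sum
      intro j hj
      rw [hH, Finset.mem_filter] at hj
      omega
    have h2 : ∑ j ∈ H, (Finset.univ.filter fun i => M i j ≠ 0).card
        ≤ ∑ j, (Finset.univ.filter fun i => M i j ≠ 0).card :=
      Finset.sum_le_sum_of_subset (Finset.subset_univ H)
    have h3 := matSparsity_eq_sum M
    rw [Finset.sum_const, smul_eq_mul] at h1
    omega
  have htle : (t : ℝ) ≤ Real.sqrt m := by
    have h1 : ((t : ℝ)) ^ 2 ≤ m := by exact_mod_cast Nat.sqrt_le' m
    calc (t : ℝ) = Real.sqrt ((t : ℝ) ^ 2) := (Real.sqrt_sq (by positivity)).symm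
      _ ≤ Real.sqrt m := Real.sqrt_le_sqrt h1
  have hsle : Real.sqrt m ≤ (t : ℝ) + 1 := by
    have h1 : (m : ℝ) ≤ ((t : ℝ) + 1) * ((t : ℝ) + 1) := by
      exact_mod_cast (Nat.lt_succ_sqrt m).le
    calc Real.sqrt m ≤ Real.sqrt (((t : ℝ) + 1) * ((t : ℝ) + 1)) := Real.sqrt_le_sqrt h1
      _ = (t : ℝ) + 1 := Real.sqrt_mul_self (by positivity)
  have hhle : (H.card : ℝ) ≤ Real.sqrt m := by
    have h1 : (H.card : ℝ) * ((t : ℝ) + 1) ≤ m := by exact_mod_cast hcount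
    nlinarith [Real.sq_sqrt (by positivity : (0:ℝ) ≤ (m:ℝ)), Real.sqrt_nonneg (m:ℝ),
      (by positivity : (0:ℝ) ≤ (H.card:ℝ)), (by positivity : (0:ℝ) ≤ (t:ℝ)), hsle, h1]
  calc (spikyRank M : ℝ) ≤ (H.card : ℝ) + t := by exact_mod_cast hrank
    _ ≤ Real.sqrt m + Real.sqrt m := add_le_add hhle htle
    _ = 2 * Real.sqrt m := by ring
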